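/- For all A, B ∈ ℝ, the function g_{A,B} is twice differentiable at every x ≠ a and satisfies the ordinary differential equation (σ²/2)·g_{A,B}''(x) + μ·g_{A,B}'(x) + h'(x) = 0 for every x ∈ ℝ with x ≠ a. -/

import Mathlib

open MeasureTheory Set Filter Topology

noncomputable def gfun (μ σ a : ℝ) (h : ℝ → ℝ) (A B x : ℝ) : ℝ :=
  A - B * Real.exp (-(2 * μ / σ ^ 2) * (x - a)) -
    (2 * μ / σ ^ 2) / μ * ∫ y in a..x, h y * Real.exp (-(2 * μ / σ ^ 2) * (x - y))

noncomputable def F1 (μ σ a : ℝ) (h : ℝ → ℝ) (B x : ℝ) : ℝ :=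
  B - 1 / μ * ∫ y in a..x, deriv h y * Real.exp ((2 * μ / σ ^ 2) * (y - a))

noncomputable def Bbar (μ σ a : ℝ) (h : ℝ → ℝ) : ℝ :=
  -(1 / μ) * ∫ y in Set.Iic a, deriv h y * Real.exp ((2 * μ / σ ^ 2) * (y - a))

theorem stmt0 (μ σ a : ℝ) (h : ℝ → ℝ)
    (hμ : 0 < μ) (hσ : 0 < σ)
    (hconv : ConvexOn ℝ Set.univ h)
    (hcont : Continuous h)
    (hnonneg : ∀ x, 0 ≤ h x)
    (ha : h a = 0)
    (hC2 : ∀ x : ℝ, x ≠ a → ContDiffAt ℝ 2 h x)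
    (hneg : ∀ x, x < a → deriv h x < 0)
    (hpos : ∀ x, a < x → 0 < deriv h x)
    (hint : IntegrableOn (fun y => |deriv h y| * Real.exp ((2 * μ / σ ^ 2) * (y - a))) (Set.Iic a))
    :
    ∀ A B : ℝ, ∀ x : ℝ, x ≠ a →
      DifferentiableAt ℝ (gfun μ σ a h A B) x ∧
      DifferentiableAt ℝ (deriv (gfun μ σ a h A B)) x ∧
      σ ^ 2 / 2 * deriv (deriv (gfun μ σ a h A B)) x +
        μ * deriv (gfun μ σ a h A B) x + deriv h x = 0 := by
  intro A B x hx
  set lam : ℝ := 2 * μ / σ ^ 2 with hlam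
  have hσ2 : (σ : ℝ) ^ 2 ≠ 0 := by positivity
  have hμ' : μ ≠ 0 := ne_of_gt hμ
  have hlampos : 0 < lam := by positivity
  -- the inner integral function
  set H : ℝ → ℝ := fun x => ∫ y in a..x, h y * Real.exp (lam * y) with hH
  have hHcont : Continuous fun y => h y * Real.exp (lam * y) := by
    exact hcont.mul (Real.continuous_exp.comp (continuous_const.mul continuous_id))
  have hHderiv : ∀ z : ℝ, HasDerivAt H (h z * Real.exp (lam * z)) z := by
    intro z
    exact intervalIntegral.integral_hasDerivAt_right
      (hHcont.intervalIntegrable a z)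
      hHcont.aestronglyMeasurable.stronglyMeasurableAtFilter
      hHcont.continuousAt
  -- rewrite gfun
  have hgeq : gfun μ σ a h A B = fun z =>
      A - B * Real.exp (-lam * (z - a)) - lam / μ * (Real.exp (-lam * z) * H z) := by
    funext z
    unfold gfun
    rw [← hlam]
    congr 1
    have : ∀ y : ℝ, h y * Real.exp (-lam * (z - y))
        = Real.exp (-lam * z) * (h y * Real.exp (lam * y)) := by
      intro y
      rw [← mul_assoc, mul_comm (Real.exp (-lam * z)), mul_assoc, ← Real.exp_add]
      ring_nf
    simp_rw [this]
    rw [intervalIntegral.integral_const_mul]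
  -- first derivative function
  set g1 : ℝ → ℝ := fun z =>
    lam * B * Real.exp (-lam * (z - a)) + lam ^ 2 / μ * (Real.exp (-lam * z) * H z)
      - lam / μ * h z with hg1
  have hd1 : ∀ z : ℝ, HasDerivAt (gfun μ σ a h A B) (g1 z) z := by
    intro z
    rw [hgeq]
    have e1 : HasDerivAt (fun w : ℝ => Real.exp (-lam * (w - a)))
        (-lam * Real.exp (-lam * (z - a))) z := by
      have : HasDerivAt (fun w : ℝ => -lam * (w - a)) (-lam) z := by
        simpa using ((hasDerivAt_id z).sub_const a).const_mul (-lam)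
      simpa [mul_comm] using this.exp
    have e2 : HasDerivAt (fun w : ℝ => Real.exp (-lam * w))
        (-lam * Real.exp (-lam * z)) z := by
      have : HasDerivAt (fun w : ℝ => -lam * w) (-lam) z := by
        simpa using (hasDerivAt_id z).const_mul (-lam)
      simpa [mul_comm] using this.exp
    have e3 : HasDerivAt (fun w : ℝ => Real.exp (-lam * w) * H w)
        (-lam * Real.exp (-lam * z) * H z + Real.exp (-lam * z) * (h z * Real.exp (lam * z)))
        z := e2.mul (hHderiv z)
    have key : Real.exp (-lam * z) * Real.exp (lam * z) = 1 := by
      rw [← Real.exp_add]; ring_nf; exact Real.exp_zero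
    have := ((hasDerivAt_const z A).sub ((e1.const_mul B))).sub (e3.const_mul (lam / μ))
    refine this.congr_deriv ?_
    have key2 : Real.exp (-lam * z) * (h z * Real.exp (lam * z)) = h z := by
      rw [mul_comm (h z), ← mul_assoc, key, one_mul]
    simp only [hg1]
    rw [key2]
    ring
  have hderiv_g : deriv (gfun μ σ a h A B) = g1 := by
    funext z; exact (hd1 z).deriv
  -- h is differentiable at x
  have hhd : HasDerivAt h (deriv h x) x :=
    ((hC2 x hx).differentiableAt (by norm_num)).hasDerivAt
  -- second derivative
  set g2 : ℝ → ℝ := fun z =>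
    -lam ^ 2 * B * Real.exp (-lam * (z - a))
      + lam ^ 2 / μ * (-lam * Real.exp (-lam * z) * H z + h z)
      - lam / μ * deriv h z with hg2
  have hd2 : HasDerivAt g1 (g2 x) x := by
    have e1 : HasDerivAt (fun w : ℝ => Real.exp (-lam * (w - a)))
        (-lam * Real.exp (-lam * (x - a))) x := by
      have : HasDerivAt (fun w : ℝ => -lam * (w - a)) (-lam) x := by
        simpa using ((hasDerivAt_id x).sub_const a).const_mul (-lam)
      simpa [mul_comm] using this.exp
    have e2 : HasDerivAt (fun w : ℝ => Real.exp (-lam * w))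
        (-lam * Real.exp (-lam * x)) x := by
      have : HasDerivAt (fun w : ℝ => -lam * w) (-lam) x := by
        simpa using (hasDerivAt_id x).const_mul (-lam)
      simpa [mul_comm] using this.exp
    have e3 : HasDerivAt (fun w : ℝ => Real.exp (-lam * w) * H w)
        (-lam * Real.exp (-lam * x) * H x + Real.exp (-lam * x) * (h x * Real.exp (lam * x)))
        x := e2.mul (hHderiv x)
    have key : Real.exp (-lam * x) * Real.exp (lam * x) = 1 := by
      rw [← Real.exp_add]; ring_nf; exact Real.exp_zero
    have := ((e1.const_mul (lam * B)).add (e3.const_mul (lam ^ 2 / μ))).sub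
      (hhd.const_mul (lam / μ))
    refine this.congr_deriv ?_
    have key2 : Real.exp (-lam * x) * (h x * Real.exp (lam * x)) = h x := by
      rw [mul_comm (h x), ← mul_assoc, key, one_mul]
    simp only [hg2]
    rw [key2]
    ring
  refine ⟨(hd1 x).differentiableAt, ?_, ?_⟩
  · rw [hderiv_g]; exact hd2.differentiableAt
  · rw [hderiv_g, hd2.deriv]
    simp only [hg1, hg2]
    rw [hlam]
    field_simp
    ring
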